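/- arXiv:1910.10295 — 6 statements merged into one kernel-verified Lean document; each statement's English description precedes it below -/
import Mathlib

section
/- Let H be a real inner product space, let a : ℕ → H be a sequence, and let N ≥ 2 be a natural number. Then Σ_{n=2}^{N} (1/2)·⟨3a_n − 4a_{n−1} + a_{n−2}, a_n⟩ = (1/4)·(‖a_N‖² + ‖2a_N − a_{N−1}‖² − ‖a_1‖² − ‖2a_1 − a_0‖²) + (1/4)·Σ_{n=2}^{N} ‖a_n − 2a_{n−1} + a_{n−2}‖². -/
open scoped RealInnerProductSpace

lemma bdf2_step_id {H : Type*} [NormedAddCommGroup H] [InnerProductSpace ℝ H]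
    (x y z : H) :
    (1 / 2) * ⟪(3 : ℝ) • z - (4 : ℝ) • y + x, z⟫
      = (1 / 4) * (‖z‖ ^ 2 + ‖(2 : ℝ) • z - y‖ ^ 2
            - ‖y‖ ^ 2 - ‖(2 : ℝ) • y - x‖ ^ 2)
        + (1 / 4) * ‖z - (2 : ℝ) • y + x‖ ^ 2 := by
  simp only [← real_inner_self_eq_norm_sq, inner_sub_left, inner_sub_right,
    inner_add_left, inner_add_right, real_inner_smul_left, real_inner_smul_right,
    real_inner_comm x y, real_inner_comm x z, real_inner_comm y z]
  ring

/-- Telescoped BDF2 polarization identity: summing Lemma 3.3 over n = 2, …, N. -/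
theorem bdf2_polarization_identity_sum
    {H : Type*} [NormedAddCommGroup H] [InnerProductSpace ℝ H]
    (a : ℕ → H) (N : ℕ) (hN : 2 ≤ N) :
    ∑ n ∈ Finset.Icc 2 N,
        (1 / 2) * ⟪(3 : ℝ) • a n - (4 : ℝ) • a (n - 1) + a (n - 2), a n⟫
      = (1 / 4) * (‖a N‖ ^ 2 + ‖(2 : ℝ) • a N - a (N - 1)‖ ^ 2
            - ‖a 1‖ ^ 2 - ‖(2 : ℝ) • a 1 - a 0‖ ^ 2)
        + (1 / 4) * ∑ n ∈ Finset.Icc 2 N,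
            ‖a n - (2 : ℝ) • a (n - 1) + a (n - 2)‖ ^ 2 := by
  induction N with
  | zero => omega
  | succ M ih =>
    rcases Nat.lt_or_ge M 2 with hM | hM
    · interval_cases M
      · omega
      · simp only [show (1:ℕ)+1=2 from rfl, Finset.Icc_self, Finset.sum_singleton]
        norm_num
        linarith [bdf2_step_id (a 0) (a 1) (a 2)]
    · have h2 : 2 ≤ M + 1 := by omega
      rw [Finset.sum_Icc_succ_top h2, Finset.sum_Icc_succ_top h2, ih hM]
      have : M + 1 - 1 = M := by omega
      rw [this]
      have h2' : M + 1 - 2 = M - 1 := by omega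
      rw [h2']
      rw [bdf2_step_id (a (M - 1)) (a M) (a (M + 1))]
      ring
end

section
/- Let E be a real Banach space. There exists a constant C > 0 (independent of the function, the time, and the step size) such that for every t ∈ ℝ, every h > 0, and every function v : ℝ → E that is continuously differentiable on the interval [t − 2h, t] with derivative v′, one has ‖(3·v(t) − 4·v(t − h) + v(t − 2h))/(2h)‖² ≤ C·h⁻¹·∫_{t−2h}^{t} ‖v′(s)‖² ds. -/
open intervalIntegral

/-- Estimate (3.6a) of Lemma 3.5: for the BDF2 difference quotient,
    ‖(3v(t) - 4v(t-h) + v(t-2h))/(2h)‖² ≤ C h⁻¹ ∫_{t-2h}^t ‖v'(s)‖² ds. -/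
theorem bdf2_difference_quotient_bound
    {E : Type*} [NormedAddCommGroup E] [NormedSpace ℝ E] [CompleteSpace E] :
    ∃ C : ℝ, 0 < C ∧
      ∀ (t h : ℝ), 0 < h →
        ∀ (v v' : ℝ → E),
          (∀ s ∈ Set.Icc (t - 2 * h) t,
              HasDerivWithinAt v (v' s) (Set.Icc (t - 2 * h) t) s) →
          ContinuousOn v' (Set.Icc (t - 2 * h) t) →
          ‖(1 / (2 * h)) • ((3 : ℝ) • v t - (4 : ℝ) • v (t - h) + v (t - 2 * h))‖ ^ 2
            ≤ C * h⁻¹ * ∫ s in (t - 2 * h)..t, ‖v' s‖ ^ 2 := by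
  refine ⟨8, by norm_num, fun t h hh v v' hv hv' => ?_⟩
  set a := t - 2 * h with ha
  set m := t - h with hm
  have ham : a ≤ m := by simp only [ha, hm]; linarith
  have hmb : m ≤ t := by simp only [hm]; linarith
  have hab : a ≤ t := ham.trans hmb
  have hcv : ContinuousOn v (Set.Icc a t) := fun x hx => (hv x hx).continuousWithinAt
  have hnc : ContinuousOn (fun s => ‖v' s‖) (Set.Icc a t) := hv'.norm
  have hn2c : ContinuousOn (fun s => ‖v' s‖ ^ 2) (Set.Icc a t) := hnc.pow 2
  have hiN : IntervalIntegrable (fun s => ‖v' s‖) MeasureTheory.volume a t :=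
    (hnc.mono (by rw [Set.uIcc_of_le hab])).intervalIntegrable
  have hiN2 : IntervalIntegrable (fun s => ‖v' s‖ ^ 2) MeasureTheory.volume a t :=
    (hn2c.mono (by rw [Set.uIcc_of_le hab])).intervalIntegrable
  have ftc : ∀ c d : ℝ, a ≤ c → c ≤ d → d ≤ t →
      (∫ s in c..d, v' s) = v d - v c := by
    intro c d hac hcd hdt
    refine integral_eq_sub_of_hasDeriv_right_of_le hcd
      (hcv.mono (Set.Icc_subset_Icc hac hdt)) (fun x hx => ?_) ?_
    · exact (hv x ⟨hac.trans hx.1.le, hx.2.le.trans hdt⟩).mono_of_mem_nhdsWithin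
        (Icc_mem_nhdsGT_of_mem ⟨hac.trans hx.1.le, hx.2.trans_le hdt⟩)
    · exact (hv'.mono (by
        rw [Set.uIcc_of_le hcd]; exact Set.Icc_subset_Icc hac hdt)).intervalIntegrable
  set X := ∫ s in a..t, ‖v' s‖ with hX
  set I := ∫ s in a..t, ‖v' s‖ ^ 2 with hI
  have hXnn : 0 ≤ X := integral_nonneg hab (fun s _ => norm_nonneg _)
  have hInn : 0 ≤ I := integral_nonneg hab (fun s _ => sq_nonneg _)
  have piece : ∀ c d : ℝ, a ≤ c → c ≤ d → d ≤ t →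
      ‖∫ s in c..d, v' s‖ ≤ X := by
    intro c d hac hcd hdt
    calc ‖∫ s in c..d, v' s‖ ≤ ∫ s in c..d, ‖v' s‖ := norm_integral_le_integral_norm hcd
      _ ≤ X := integral_mono_interval hac hcd hdt
          (Filter.Eventually.of_forall fun s => norm_nonneg _) hiN
  have key : ∀ ε : ℝ, 0 < ε → X ≤ h * ε + I / (2 * ε) := by
    intro ε hε
    have h1 : IntervalIntegrable (fun s => ‖v' s‖ ^ 2 / (2 * ε)) MeasureTheory.volume a t := by
      simpa [div_eq_mul_inv] using hiN2.mul_const (2 * ε)⁻¹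
    have h2 : IntervalIntegrable (fun s => ε / 2 + ‖v' s‖ ^ 2 / (2 * ε))
        MeasureTheory.volume a t :=
      (intervalIntegrable_const (c := ε / 2)).add h1
    have mono : X ≤ ∫ s in a..t, (ε / 2 + ‖v' s‖ ^ 2 / (2 * ε)) := by
      refine integral_mono_on hab hiN h2 (fun x _ => ?_)
      have h2e : (0:ℝ) < 2 * ε := by positivity
      rw [← sub_nonneg]
      have : ε / 2 + ‖v' x‖ ^ 2 / (2 * ε) - ‖v' x‖ = (ε - ‖v' x‖) ^ 2 / (2 * ε) := by
        field_simp; ring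
      rw [this]; positivity
    have split : (∫ s in a..t, (ε / 2 + ‖v' s‖ ^ 2 / (2 * ε)))
        = h * ε + I / (2 * ε) := by
      rw [integral_add (intervalIntegrable_const (c := ε / 2)) h1]
      have e1 : (∫ s in a..t, ‖v' s‖ ^ 2 / (2 * ε)) = I / (2 * ε) := by
        simp [div_eq_mul_inv, integral_mul_const, hI]
      have e2 : t - a = 2 * h := by simp only [ha]; ring
      rw [e1, integral_const, e2, smul_eq_mul]; ring
    linarith [split ▸ mono]
  have CS : X ^ 2 ≤ 2 * h * I := by
    rcases eq_or_lt_of_le hXnn with h0 | h0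
    · rw [← h0]; nlinarith
    · have hh0 : h ≠ 0 := ne_of_gt hh
      have hX0 : X ≠ 0 := ne_of_gt h0
      have k := key (X / (2 * h)) (div_pos h0 (by linarith))
      have e1 : h * (X / (2 * h)) = X / 2 := by field_simp
      have e2 : I / (2 * (X / (2 * h))) = h * I / X := by
        rw [div_eq_div_iff (by positivity) hX0]; field_simp
      rw [e1, e2] at k
      have k2 : X / 2 ≤ h * I / X := by linarith
      have := (le_div_iff₀ h0).mp k2
      nlinarith
  have hft1 : (∫ s in m..t, v' s) = v t - v m := ftc m t ham hmb le_rfl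
  have hft2 : (∫ s in a..m, v' s) = v m - v a := ftc a m le_rfl ham hmb
  have hD : (3 : ℝ) • v t - (4 : ℝ) • v m + v a
      = (3 : ℝ) • (∫ s in m..t, v' s) - ∫ s in a..m, v' s := by
    rw [hft1, hft2]; module
  have hDn : ‖(3 : ℝ) • v t - (4 : ℝ) • v m + v a‖ ≤ 4 * X := by
    rw [hD]
    calc ‖(3 : ℝ) • (∫ s in m..t, v' s) - ∫ s in a..m, v' s‖
        ≤ ‖(3 : ℝ) • (∫ s in m..t, v' s)‖ + ‖∫ s in a..m, v' s‖ := norm_sub_le _ _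
      _ ≤ 3 * X + X := by
          rw [norm_smul]
          have h1 := piece m t ham hmb le_rfl
          have h2 := piece a m le_rfl ham hmb
          simp only [Real.norm_ofNat]
          nlinarith
      _ = 4 * X := by ring
  rw [norm_smul]
  have : ‖(1 : ℝ) / (2 * h)‖ = 1 / (2 * h) := by
    rw [Real.norm_eq_abs, abs_of_pos (by positivity)]
  rw [this]
  have hnn := norm_nonneg ((3 : ℝ) • v t - (4 : ℝ) • v m + v a)
  calc (1 / (2 * h) * ‖(3 : ℝ) • v t - (4 : ℝ) • v m + v a‖) ^ 2
      ≤ (1 / (2 * h) * (4 * X)) ^ 2 := by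
        apply pow_le_pow_left₀ (by positivity)
        have h2 : (0:ℝ) ≤ 1 / (2 * h) := by positivity
        nlinarith
    _ = (4 / (2 * h)) ^ 2 * X ^ 2 := by ring
    _ ≤ (4 / (2 * h)) ^ 2 * (2 * h * I) := by nlinarith [sq_nonneg (4 / (2 * h))]
    _ = (8 / h) * I := by field_simp; ring
    _ = 8 * h⁻¹ * I := by ring
end

section
/- Let E be a real Banach space. There exists a constant C > 0 (independent of the function, the time, and the step size) such that for every t ∈ ℝ, every h > 0, and every function v : ℝ → E that is three times continuously differentiable on the interval [t − 2h, t] with first derivative v′ and third derivative v‴, one has ‖v′(t) − (3·v(t) − 4·v(t − h) + v(t − 2h))/(2h)‖² ≤ C·h³·∫_{t−2h}^{t} ‖v‴(s)‖² ds. -/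
open intervalIntegral Set MeasureTheory

section helpers
variable {E : Type*} [NormedAddCommGroup E] [NormedSpace ℝ E] [CompleteSpace E]

lemma taylor2_left {a b : ℝ} (hab : a ≤ b) (v v' v'' v''' : ℝ → E)
    (h1 : ∀ s ∈ Icc a b, HasDerivWithinAt v (v' s) (Icc a b) s)
    (h2 : ∀ s ∈ Icc a b, HasDerivWithinAt v' (v'' s) (Icc a b) s)
    (h3 : ∀ s ∈ Icc a b, HasDerivWithinAt v'' (v''' s) (Icc a b) s)
    (hc : ContinuousOn v''' (Icc a b)) :
    v a = v b + (a - b) • v' b + (((a - b) ^ 2 / 2) : ℝ) • v'' b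
        - ∫ s in a..b, (((a - s) ^ 2 / 2) : ℝ) • v''' s := by
  set g : ℝ → E := fun s => v s + (a - s) • v' s + (((a - s) ^ 2 / 2) : ℝ) • v'' s with hg
  have hgderiv : ∀ s ∈ Icc a b,
      HasDerivWithinAt g ((((a - s) ^ 2 / 2) : ℝ) • v''' s) (Icc a b) s := by
    intro s hs
    have d1 : HasDerivWithinAt (fun u => (a - u) • v' u)
        ((a - s) • v'' s + -v' s) (Icc a b) s := by
      have : HasDerivWithinAt (fun u : ℝ => a - u) (-1) (Icc a b) s :=
        ((hasDerivWithinAt_id s _).const_sub a)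
      exact (this.smul (h2 s hs)).congr_deriv (by simp)
    have d2 : HasDerivWithinAt (fun u => (((a - u) ^ 2 / 2) : ℝ) • v'' u)
        ((((a - s) ^ 2 / 2) : ℝ) • v''' s + (s - a) • v'' s) (Icc a b) s := by
      have hq : HasDerivWithinAt (fun u : ℝ => (a - u) ^ 2 / 2) (s - a) (Icc a b) s := by
        have : HasDerivWithinAt (fun u : ℝ => a - u) (-1) (Icc a b) s :=
          ((hasDerivWithinAt_id s _).const_sub a)
        have h2' := (this.pow 2).div_const 2
        refine h2'.congr_deriv ?_
        rw [show (2:ℕ) - 1 = 1 from rfl]; push_cast; ring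
      exact hq.smul (h3 s hs)
    have := ((h1 s hs).add d1).add d2
    convert this using 1
    · rfl
    module
  have hgcont : ContinuousOn g (Icc a b) := fun s hs => (hgderiv s hs).continuousWithinAt
  have hint : IntervalIntegrable (fun s => (((a - s) ^ 2 / 2) : ℝ) • v''' s) volume a b := by
    apply ContinuousOn.intervalIntegrable
    rw [uIcc_of_le hab]
    exact (Continuous.continuousOn (by continuity)).smul hc
  have hftc := integral_eq_sub_of_hasDeriv_right_of_le hab hgcont
    (fun x hx => ((hgderiv x (Ioo_subset_Icc_self hx)).hasDerivAt
      (Icc_mem_nhds hx.1 hx.2)).hasDerivWithinAt) hint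
  have hgb : g b = v b + (a - b) • v' b + (((a - b) ^ 2 / 2) : ℝ) • v'' b := rfl
  have hga : g a = v a := by simp [hg]
  rw [← hgb, ← hga, hftc]
  abel

lemma cs_interval {a b : ℝ} (hab : a ≤ b) {f : ℝ → ℝ}
    (hf : ContinuousOn f (Icc a b)) (hpos : ∀ s ∈ Icc a b, 0 ≤ f s) :
    (∫ s in a..b, f s) ^ 2 ≤ (b - a) * ∫ s in a..b, f s ^ 2 := by
  set μ : Measure ℝ := volume.restrict (Ioc a b) with hμ
  haveI : IsFiniteMeasure μ := by
    constructor
    rw [hμ, Measure.restrict_apply_univ, Real.volume_Ioc]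
    exact ENNReal.ofReal_lt_top
  obtain ⟨M, hM⟩ := (isCompact_Icc).exists_bound_of_continuousOn hf
  have hfm : AEStronglyMeasurable f μ := hf.aestronglyMeasurable measurableSet_Icc |>.mono_measure
    (Measure.restrict_mono Ioc_subset_Icc_self le_rfl)
  have hmem : MemLp f (ENNReal.ofReal 2) μ := by
    refine MemLp.of_bound hfm M ?_
    rw [hμ, ae_restrict_iff' measurableSet_Ioc]
    exact Filter.Eventually.of_forall fun x hx => hM x (Ioc_subset_Icc_self hx)
  have hone : MemLp (fun _ : ℝ => (1 : ℝ)) (ENNReal.ofReal 2) μ := memLp_const 1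
  have hconj : (2 : ℝ).HolderConjugate 2 := by rw [Real.holderConjugate_iff]; norm_num
  have hle := integral_mul_le_Lp_mul_Lq_of_nonneg hconj
    (f := f) (g := fun _ => (1 : ℝ)) (μ := μ)
    ?_ (Filter.Eventually.of_forall fun _ => zero_le_one) hmem hone
  · have h1 : ∫ x, f x * 1 ∂μ = ∫ s in a..b, f s := by
      rw [integral_of_le hab]; simp [hμ]
    have h2 : ∫ x, f x ^ (2:ℝ) ∂μ = ∫ s in a..b, f s ^ 2 := by
      rw [integral_of_le hab, hμ]
      apply setIntegral_congr_fun measurableSet_Ioc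
      intro x hx
      have : (f x) ^ (2:ℝ) = f x ^ (2:ℕ) := by
        rw [← Real.rpow_natCast (f x) 2]; norm_num
      simpa using this
    have h3 : ∫ x, (1:ℝ) ^ (2:ℝ) ∂μ = b - a := by
      simp [hμ, Real.volume_Ioc, ENNReal.toReal_ofReal (sub_nonneg.2 hab), hab]
    rw [h1, h2, h3] at hle
    have hI2 : 0 ≤ ∫ s in a..b, f s ^ 2 :=
      intervalIntegral.integral_nonneg hab fun x _ => sq_nonneg _
    have hIpos : 0 ≤ ∫ s in a..b, f s :=
      intervalIntegral.integral_nonneg hab fun x hx => hpos x hx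
    calc (∫ s in a..b, f s) ^ 2
        ≤ ((∫ s in a..b, f s ^ 2) ^ (1/2:ℝ) * (b - a) ^ (1/2:ℝ)) ^ 2 := by
          apply pow_le_pow_left₀ hIpos hle
      _ = (b - a) * ∫ s in a..b, f s ^ 2 := by
          rw [mul_pow, ← Real.rpow_natCast (_ ^ (1/2:ℝ)) 2, ← Real.rpow_natCast (_ ^ (1/2:ℝ)) 2,
            ← Real.rpow_mul hI2, ← Real.rpow_mul (sub_nonneg.2 hab)]
          norm_num
          ring
  · rw [hμ]
    filter_upwards [ae_restrict_mem measurableSet_Ioc] with x hx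
      using hpos x (Ioc_subset_Icc_self hx)

end helpers

/-- BDF2 truncation error estimate (3.6c) of Lemma 3.5:
    ‖v'(t) - (3v(t) - 4v(t-h) + v(t-2h))/(2h)‖² ≤ C h³ ∫_{t-2h}^t ‖v'''(s)‖² ds. -/
theorem bdf2_truncation_error_bound
    {E : Type*} [NormedAddCommGroup E] [NormedSpace ℝ E] [CompleteSpace E] :
    ∃ C : ℝ, 0 < C ∧
      ∀ (t h : ℝ), 0 < h →
        ∀ (v v' v'' v''' : ℝ → E),
          (∀ s ∈ Set.Icc (t - 2 * h) t,
              HasDerivWithinAt v (v' s) (Set.Icc (t - 2 * h) t) s) →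
          (∀ s ∈ Set.Icc (t - 2 * h) t,
              HasDerivWithinAt v' (v'' s) (Set.Icc (t - 2 * h) t) s) →
          (∀ s ∈ Set.Icc (t - 2 * h) t,
              HasDerivWithinAt v'' (v''' s) (Set.Icc (t - 2 * h) t) s) →
          ContinuousOn v''' (Set.Icc (t - 2 * h) t) →
          ‖v' t - (1 / (2 * h)) • ((3 : ℝ) • v t - (4 : ℝ) • v (t - h) + v (t - 2 * h))‖ ^ 2
            ≤ C * h ^ 3 * ∫ s in (t - 2 * h)..t, ‖v''' s‖ ^ 2 := by
  refine ⟨8, by norm_num, fun t h hh v v' v'' v''' hd1 hd2 hd3 hc => ?_⟩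
  have h2t : t - 2 * h ≤ t := by linarith
  have h1t : t - h ≤ t := by linarith
  have hsub : Icc (t - h) t ⊆ Icc (t - 2 * h) t := Icc_subset_Icc (by linarith) le_rfl
  have htmem : t ∈ Icc (t - 2 * h) t := ⟨h2t, le_rfl⟩
  -- Taylor expansions
  have eq1 := taylor2_left h1t v v' v'' v'''
    (fun s hs => (hd1 s (hsub hs)).mono hsub)
    (fun s hs => (hd2 s (hsub hs)).mono hsub)
    (fun s hs => (hd3 s (hsub hs)).mono hsub)
    (hc.mono hsub)
  have eq2 := taylor2_left h2t v v' v'' v''' hd1 hd2 hd3 hc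
  set Rh : E := ∫ s in (t - h)..t, (((t - h - s) ^ 2 / 2) : ℝ) • v''' s with hRhdef
  set R2h : E := ∫ s in (t - 2 * h)..t, (((t - 2 * h - s) ^ 2 / 2) : ℝ) • v''' s with hR2hdef
  have hne : (2 * h : ℝ) ≠ 0 := by positivity
  -- algebraic identity
  have key : v' t - (1 / (2 * h)) • ((3 : ℝ) • v t - (4 : ℝ) • v (t - h) + v (t - 2 * h))
      = (1 / (2 * h)) • (R2h - (4 : ℝ) • Rh) := by
    rw [eq1, eq2]
    have e1 : ((3 : ℝ) • v t
        - (4 : ℝ) • (v t + (t - h - t) • v' t + (((t - h - t) ^ 2 / 2) : ℝ) • v'' t - Rh)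
        + (v t + (t - 2 * h - t) • v' t + (((t - 2 * h - t) ^ 2 / 2) : ℝ) • v'' t - R2h))
        = (2 * h) • v' t + ((4 : ℝ) • Rh - R2h) := by module
    rw [e1, smul_add, smul_smul]
    have h1 : (1 / (2 * h)) * (2 * h) = 1 := by field_simp
    rw [h1, one_smul]
    module
  rw [key]
  -- bounds on the remainders
  set J : ℝ := ∫ s in (t - 2 * h)..t, ‖v''' s‖ with hJdef
  set I : ℝ := ∫ s in (t - 2 * h)..t, ‖v''' s‖ ^ 2 with hIdef
  have hnormc : ContinuousOn (fun s => ‖v''' s‖) (Icc (t - 2 * h) t) := hc.norm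
  have hnormint : IntervalIntegrable (fun s => ‖v''' s‖) volume (t - 2 * h) t := by
    apply ContinuousOn.intervalIntegrable
    rwa [uIcc_of_le h2t]
  have hJ : 0 ≤ J := intervalIntegral.integral_nonneg h2t fun s _ => norm_nonneg _
  have hI : 0 ≤ I := intervalIntegral.integral_nonneg h2t fun s _ => sq_nonneg _
  -- generic remainder bound
  have hrem : ∀ a : ℝ, t - 2 * h ≤ a → a ≤ t →
      ‖∫ s in a..t, (((a - s) ^ 2 / 2) : ℝ) • v''' s‖ ≤ ((t - a) ^ 2 / 2) * J := by
    intro a ha hat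
    have hsub' : Icc a t ⊆ Icc (t - 2 * h) t := Icc_subset_Icc ha le_rfl
    have hci : IntervalIntegrable (fun s => (((a - s) ^ 2 / 2) : ℝ) • v''' s) volume a t := by
      apply ContinuousOn.intervalIntegrable
      rw [uIcc_of_le hat]
      exact (Continuous.continuousOn (by continuity)).smul (hc.mono hsub')
    have h1 : ‖∫ s in a..t, (((a - s) ^ 2 / 2) : ℝ) • v''' s‖
        ≤ ∫ s in a..t, ‖(((a - s) ^ 2 / 2) : ℝ) • v''' s‖ :=
      intervalIntegral.norm_integral_le_integral_norm hat
    have h2 : (∫ s in a..t, ‖(((a - s) ^ 2 / 2) : ℝ) • v''' s‖)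
        ≤ ∫ s in a..t, ((t - a) ^ 2 / 2) * ‖v''' s‖ := by
      apply intervalIntegral.integral_mono_on hat (hci.norm)
      · exact (hnormint.mono_set (by rw [uIcc_of_le hat, uIcc_of_le h2t]; exact hsub')).const_mul _
      · intro s hs
        rw [norm_smul, Real.norm_eq_abs, abs_of_nonneg (by positivity)]
        have hb : (a - s) ^ 2 ≤ (t - a) ^ 2 := by nlinarith [hs.1, hs.2]
        have := norm_nonneg (v''' s)
        nlinarith
    have h3 : (∫ s in a..t, ((t - a) ^ 2 / 2) * ‖v''' s‖)
        = ((t - a) ^ 2 / 2) * ∫ s in a..t, ‖v''' s‖ := intervalIntegral.integral_const_mul _ _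
    have h4 : (∫ s in a..t, ‖v''' s‖) ≤ J := by
      rw [hJdef]
      exact intervalIntegral.integral_mono_interval ha hat le_rfl
        (Filter.Eventually.of_forall fun s => norm_nonneg _) hnormint
    calc ‖∫ s in a..t, (((a - s) ^ 2 / 2) : ℝ) • v''' s‖
        ≤ ∫ s in a..t, ((t - a) ^ 2 / 2) * ‖v''' s‖ := h1.trans h2
      _ = ((t - a) ^ 2 / 2) * ∫ s in a..t, ‖v''' s‖ := h3
      _ ≤ ((t - a) ^ 2 / 2) * J := by
          apply mul_le_mul_of_nonneg_left h4 (by positivity)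
  have hRh : ‖Rh‖ ≤ (h ^ 2 / 2) * J := by
    have h0 := hrem (t - h) (by linarith) h1t
    have e : (t - (t - h)) ^ 2 / 2 * J = h ^ 2 / 2 * J := by ring
    rw [e] at h0
    exact h0
  have hR2h : ‖R2h‖ ≤ (2 * h ^ 2) * J := by
    have h0 := hrem (t - 2 * h) le_rfl h2t
    have e : (t - (t - 2 * h)) ^ 2 / 2 * J = 2 * h ^ 2 * J := by ring
    rw [e] at h0
    exact h0
  -- Cauchy-Schwarz
  have hcs : J ^ 2 ≤ (2 * h) * I := by
    have := cs_interval h2t hnormc fun s _ => norm_nonneg (v''' s)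
    have e : t - (t - 2 * h) = 2 * h := by ring
    rw [e] at this
    exact this
  -- final estimate
  have herr : ‖(1 / (2 * h)) • (R2h - (4 : ℝ) • Rh)‖ ≤ 2 * h * J := by
    rw [norm_smul, Real.norm_eq_abs, abs_of_pos (by positivity)]
    have htr : ‖R2h - (4 : ℝ) • Rh‖ ≤ ‖R2h‖ + 4 * ‖Rh‖ := by
      calc ‖R2h - (4 : ℝ) • Rh‖ ≤ ‖R2h‖ + ‖(4 : ℝ) • Rh‖ := norm_sub_le _ _
        _ = ‖R2h‖ + 4 * ‖Rh‖ := by rw [norm_smul]; norm_num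
    have : ‖R2h‖ + 4 * ‖Rh‖ ≤ 4 * h ^ 2 * J := by nlinarith
    calc (1 / (2 * h)) * ‖R2h - (4 : ℝ) • Rh‖ ≤ (1 / (2 * h)) * (4 * h ^ 2 * J) := by
          apply mul_le_mul_of_nonneg_left (htr.trans this) (by positivity)
      _ = 2 * h * J := by field_simp; ring
  calc ‖(1 / (2 * h)) • (R2h - (4 : ℝ) • Rh)‖ ^ 2 ≤ (2 * h * J) ^ 2 :=
        pow_le_pow_left₀ (norm_nonneg _) herr 2
    _ = 4 * h ^ 2 * J ^ 2 := by ring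
    _ ≤ 4 * h ^ 2 * ((2 * h) * I) := by
        apply mul_le_mul_of_nonneg_left hcs (by positivity)
    _ = 8 * h ^ 3 * I := by ring
end

section
/- Let E be a real Banach space. There exists a constant C > 0 such that for every T > 0, every natural number N ≥ 2, with Δt := T/N and tₙ := n·Δt, and every function v : ℝ → E that is continuously differentiable on [0, T] with derivative v′, one has Δt·Σ_{n=2}^{N} ‖(3·v(tₙ) − 4·v(t_{n−1}) + v(t_{n−2}))/(2Δt)‖² ≤ C·∫_{0}^{T} ‖v′(s)‖² ds. -/
open intervalIntegral

/-- Cauchy–Schwarz for interval integrals of a continuous real function. -/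
lemma bdf2_aux_cs {φ : ℝ → ℝ} {a b : ℝ} (hab : a ≤ b)
    (hφ : ContinuousOn φ (Set.Icc a b)) :
    (∫ x in a..b, φ x) ^ 2 ≤ (b - a) * ∫ x in a..b, (φ x) ^ 2 := by
  have huIcc : Set.uIcc a b = Set.Icc a b := Set.uIcc_of_le hab
  have hi1 : IntervalIntegrable φ MeasureTheory.volume a b := by
    apply ContinuousOn.intervalIntegrable; rwa [huIcc]
  have hi2 : IntervalIntegrable (fun x => (φ x) ^ 2) MeasureTheory.volume a b := by
    apply ContinuousOn.intervalIntegrable; rw [huIcc]; exact hφ.pow 2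
  set L : ℝ := b - a with hL
  set A : ℝ := ∫ x in a..b, φ x with hA
  set B : ℝ := ∫ x in a..b, (φ x) ^ 2 with hB
  have hLnn : 0 ≤ L := by simp [hL]; linarith
  rcases eq_or_lt_of_le hLnn with hL0 | hLpos
  · have hba : b = a := by simp [hL] at hL0; linarith
    have hA0 : A = 0 := by simp [hA, hba]
    rw [hA0, ← hL0]
    norm_num
  · have h1 : (0:ℝ) ≤ ∫ x in a..b, (L * φ x - A) ^ 2 :=
      intervalIntegral.integral_nonneg hab (fun x _ => sq_nonneg _)
    have hexp : (∫ x in a..b, (L * φ x - A) ^ 2)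
        = L ^ 2 * B - 2 * L * A * A + A ^ 2 * L := by
      have : ∀ x, (L * φ x - A) ^ 2
          = L ^ 2 * (φ x) ^ 2 - (2 * L * A) * φ x + A ^ 2 := by
        intro x; ring
      rw [intervalIntegral.integral_congr (g := fun x =>
        L ^ 2 * (φ x) ^ 2 - (2 * L * A) * φ x + A ^ 2) (fun x _ => this x)]
      rw [intervalIntegral.integral_add ((hi2.const_mul _).sub (hi1.const_mul _))
        intervalIntegrable_const,
        intervalIntegral.integral_sub (hi2.const_mul _) (hi1.const_mul _),
        intervalIntegral.integral_const_mul, intervalIntegral.integral_const_mul,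
        intervalIntegral.integral_const]
      simp only [← hA, ← hB, smul_eq_mul, ← hL]
      ring
    rw [hexp] at h1
    nlinarith [sq_nonneg A, sq_nonneg L]

/-- Summed form of estimate (3.6a): on the uniform partition tₙ = nΔt of [0,T],
    Δt Σ_{n=2}^N ‖(3v(tₙ) - 4v(t_{n-1}) + v(t_{n-2}))/(2Δt)‖² ≤ C ∫_0^T ‖v'‖². -/
theorem bdf2_difference_quotient_sum_bound
    {E : Type*} [NormedAddCommGroup E] [NormedSpace ℝ E] [CompleteSpace E] :
    ∃ C : ℝ, 0 < C ∧
      ∀ (T : ℝ), 0 < T →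
        ∀ (N : ℕ), 2 ≤ N →
          ∀ (v v' : ℝ → E),
            (∀ s ∈ Set.Icc (0 : ℝ) T,
                HasDerivWithinAt v (v' s) (Set.Icc (0 : ℝ) T) s) →
            ContinuousOn v' (Set.Icc (0 : ℝ) T) →
            (T / N) * ∑ n ∈ Finset.Icc 2 N,
                ‖(1 / (2 * (T / N))) •
                    ((3 : ℝ) • v ((n : ℝ) * (T / N))
                      - (4 : ℝ) • v (((n : ℝ) - 1) * (T / N))
                      + v (((n : ℝ) - 2) * (T / N)))‖ ^ 2
              ≤ C * ∫ s in (0 : ℝ)..T, ‖v' s‖ ^ 2 := by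
  refine ⟨5, by norm_num, ?_⟩
  intro T hT N hN v v' hv hv'
  have hN0 : (0:ℝ) < N := by positivity
  set h : ℝ := T / N with hh
  have hpos : 0 < h := div_pos hT hN0
  have hNh : (N : ℝ) * h = T := by rw [hh]; field_simp [hN0.ne']
  have hgc : ContinuousOn (fun s => ‖v' s‖ ^ 2) (Set.Icc 0 T) := (hv'.norm).pow 2
  -- integrability on subintervals of [0, T]
  have gint : ∀ a b : ℝ, 0 ≤ a → a ≤ b → b ≤ T →
      IntervalIntegrable (fun s => ‖v' s‖ ^ 2) MeasureTheory.volume a b := by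
    intro a b ha hab hb
    apply ContinuousOn.intervalIntegrable
    refine hgc.mono ?_
    rw [Set.uIcc_of_le hab]
    exact Set.Icc_subset_Icc ha hb
  -- monotonicity: integral over a subinterval is at most the full integral
  have gmono : ∀ a b : ℝ, 0 ≤ a → a ≤ b → b ≤ T →
      (∫ s in a..b, ‖v' s‖ ^ 2) ≤ ∫ s in (0:ℝ)..T, ‖v' s‖ ^ 2 := by
    intro a b ha hab hb
    have e1 : (∫ s in (0:ℝ)..a, ‖v' s‖ ^ 2) + (∫ s in a..b, ‖v' s‖ ^ 2)
        = ∫ s in (0:ℝ)..b, ‖v' s‖ ^ 2 :=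
      intervalIntegral.integral_add_adjacent_intervals
        (gint 0 a le_rfl ha (hab.trans hb)) (gint a b ha hab hb)
    have e2 : (∫ s in (0:ℝ)..b, ‖v' s‖ ^ 2) + (∫ s in b..T, ‖v' s‖ ^ 2)
        = ∫ s in (0:ℝ)..T, ‖v' s‖ ^ 2 :=
      intervalIntegral.integral_add_adjacent_intervals
        (gint 0 b le_rfl (ha.trans hab) hb) (gint b T (ha.trans hab) hb le_rfl)
    have n1 : 0 ≤ ∫ s in (0:ℝ)..a, ‖v' s‖ ^ 2 :=
      intervalIntegral.integral_nonneg ha (fun x _ => sq_nonneg _)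
    have n2 : 0 ≤ ∫ s in b..T, ‖v' s‖ ^ 2 :=
      intervalIntegral.integral_nonneg hb (fun x _ => sq_nonneg _)
    linarith
  -- FTC + Cauchy–Schwarz : ‖v b - v a‖² ≤ (b - a) * ∫_a^b ‖v'‖²
  have key : ∀ a b : ℝ, 0 ≤ a → a ≤ b → b ≤ T →
      ‖v b - v a‖ ^ 2 ≤ (b - a) * ∫ s in a..b, ‖v' s‖ ^ 2 := by
    intro a b ha hab hb
    have hsub : Set.Icc a b ⊆ Set.Icc 0 T := Set.Icc_subset_Icc ha hb
    have hvc : ContinuousOn v (Set.Icc 0 T) := fun x hx => (hv x hx).continuousWithinAt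
    have hv'int : IntervalIntegrable v' MeasureTheory.volume a b := by
      apply ContinuousOn.intervalIntegrable
      refine hv'.mono ?_
      rwa [Set.uIcc_of_le hab]
    have hftc : (∫ s in a..b, v' s) = v b - v a := by
      refine intervalIntegral.integral_eq_sub_of_hasDeriv_right_of_le hab
        (hvc.mono hsub) ?_ hv'int
      intro x hx
      have hx0T : x ∈ Set.Ioo (0:ℝ) T := ⟨lt_of_le_of_lt ha hx.1, lt_of_lt_of_le hx.2 hb⟩
      have hnhds : Set.Icc (0:ℝ) T ∈ nhds x := Icc_mem_nhds hx0T.1 hx0T.2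
      exact ((hv x (Set.Ioo_subset_Icc_self hx0T)).hasDerivAt hnhds).hasDerivWithinAt
    have h1 : ‖v b - v a‖ ≤ ∫ s in a..b, ‖v' s‖ := by
      rw [← hftc]
      exact intervalIntegral.norm_integral_le_integral_norm hab
    have h2 : (∫ s in a..b, ‖v' s‖) ^ 2 ≤ (b - a) * ∫ s in a..b, ‖v' s‖ ^ 2 :=
      bdf2_aux_cs hab ((hv'.mono hsub).norm)
    calc ‖v b - v a‖ ^ 2 ≤ (∫ s in a..b, ‖v' s‖) ^ 2 :=
          pow_le_pow_left₀ (norm_nonneg _) h1 2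
      _ ≤ (b - a) * ∫ s in a..b, ‖v' s‖ ^ 2 := h2
  -- per-term bound
  have term_bound : ∀ n ∈ Finset.Icc 2 N,
      h * ‖(1 / (2 * h)) •
          ((3 : ℝ) • v ((n : ℝ) * h) - (4 : ℝ) • v (((n : ℝ) - 1) * h)
            + v (((n : ℝ) - 2) * h))‖ ^ 2
        ≤ (9/2) * (∫ s in (((n:ℝ) - 1) * h)..((n:ℝ) * h), ‖v' s‖ ^ 2)
          + (1/2) * (∫ s in (((n:ℝ) - 2) * h)..(((n:ℝ) - 1) * h), ‖v' s‖ ^ 2) := by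
    intro n hn
    simp only [Finset.mem_Icc] at hn
    have hn2 : (2:ℝ) ≤ (n:ℝ) := by exact_mod_cast hn.1
    have hnN : (n:ℝ) ≤ (N:ℝ) := by exact_mod_cast hn.2
    set t0 : ℝ := ((n:ℝ) - 2) * h
    set t1 : ℝ := ((n:ℝ) - 1) * h
    set t2 : ℝ := (n:ℝ) * h
    have ht0 : 0 ≤ t0 := mul_nonneg (by linarith) hpos.le
    have h01 : t0 ≤ t1 :=
      mul_le_mul_of_nonneg_right (by linarith : ((n:ℝ) - 2) ≤ ((n:ℝ) - 1)) hpos.le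
    have h12 : t1 ≤ t2 :=
      mul_le_mul_of_nonneg_right (by linarith : ((n:ℝ) - 1) ≤ (n:ℝ)) hpos.le
    have ht2T : t2 ≤ T := by
      rw [← hNh]
      exact mul_le_mul_of_nonneg_right hnN hpos.le
    have ht1T : t1 ≤ T := h12.trans ht2T
    set D1 : E := v t2 - v t1
    set D2 : E := v t1 - v t0
    have hsplit : (3 : ℝ) • v t2 - (4 : ℝ) • v t1 + v t0 = (3:ℝ) • D1 - D2 := by
      simp only [D1, D2, smul_sub]
      module
    have hD1 : ‖D1‖ ^ 2 ≤ h * ∫ s in t1..t2, ‖v' s‖ ^ 2 := by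
      have := key t1 t2 (ht0.trans h01) h12 ht2T
      have ht21 : t2 - t1 = h := by simp only [t1, t2]; ring
      rwa [ht21] at this
    have hD2 : ‖D2‖ ^ 2 ≤ h * ∫ s in t0..t1, ‖v' s‖ ^ 2 := by
      have := key t0 t1 ht0 h01 ht1T
      have ht10 : t1 - t0 = h := by simp only [t0, t1]; ring
      rwa [ht10] at this
    have hnorm : ‖(1 / (2 * h)) • ((3 : ℝ) • v t2 - (4 : ℝ) • v t1 + v t0)‖
        = (1 / (2 * h)) * ‖(3:ℝ) • D1 - D2‖ := by
      rw [hsplit, norm_smul, Real.norm_eq_abs, abs_of_pos (by positivity)]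
    have htri : ‖(3:ℝ) • D1 - D2‖ ≤ 3 * ‖D1‖ + ‖D2‖ := by
      calc ‖(3:ℝ) • D1 - D2‖ ≤ ‖(3:ℝ) • D1‖ + ‖D2‖ := norm_sub_le _ _
        _ = 3 * ‖D1‖ + ‖D2‖ := by rw [norm_smul]; norm_num
    have hsq : ‖(1 / (2 * h)) • ((3 : ℝ) • v t2 - (4 : ℝ) • v t1 + v t0)‖ ^ 2
        ≤ (1 / (2 * h)) ^ 2 * (3 * ‖D1‖ + ‖D2‖) ^ 2 := by
      rw [hnorm, mul_pow]
      have : ‖(3:ℝ) • D1 - D2‖ ^ 2 ≤ (3 * ‖D1‖ + ‖D2‖) ^ 2 :=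
        pow_le_pow_left₀ (norm_nonneg _) htri 2
      exact mul_le_mul_of_nonneg_left this (by positivity)
    have hsq2 : (3 * ‖D1‖ + ‖D2‖) ^ 2 ≤ 18 * ‖D1‖ ^ 2 + 2 * ‖D2‖ ^ 2 := by
      nlinarith [sq_nonneg (3 * ‖D1‖ - ‖D2‖)]
    calc h * ‖(1 / (2 * h)) • ((3 : ℝ) • v t2 - (4 : ℝ) • v t1 + v t0)‖ ^ 2
        ≤ h * ((1 / (2 * h)) ^ 2 * (18 * ‖D1‖ ^ 2 + 2 * ‖D2‖ ^ 2)) := by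
          refine mul_le_mul_of_nonneg_left ?_ hpos.le
          calc ‖(1 / (2 * h)) • ((3 : ℝ) • v t2 - (4 : ℝ) • v t1 + v t0)‖ ^ 2
              ≤ (1 / (2 * h)) ^ 2 * (3 * ‖D1‖ + ‖D2‖) ^ 2 := hsq
            _ ≤ (1 / (2 * h)) ^ 2 * (18 * ‖D1‖ ^ 2 + 2 * ‖D2‖ ^ 2) :=
                mul_le_mul_of_nonneg_left hsq2 (by positivity)
      _ ≤ h * ((1 / (2 * h)) ^ 2 * (18 * (h * ∫ s in t1..t2, ‖v' s‖ ^ 2)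
            + 2 * (h * ∫ s in t0..t1, ‖v' s‖ ^ 2))) := by
          refine mul_le_mul_of_nonneg_left (mul_le_mul_of_nonneg_left ?_ (by positivity))
            hpos.le
          have := mul_le_mul_of_nonneg_left hD1 (by norm_num : (0:ℝ) ≤ 18)
          have := mul_le_mul_of_nonneg_left hD2 (by norm_num : (0:ℝ) ≤ 2)
          linarith
      _ = (9/2) * (∫ s in t1..t2, ‖v' s‖ ^ 2) + (1/2) * (∫ s in t0..t1, ‖v' s‖ ^ 2) := by
          field_simp
          ring
  -- sum the per-term bounds
  have step1 : (T / N) * ∑ n ∈ Finset.Icc 2 N,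
      ‖(1 / (2 * (T / N))) •
          ((3 : ℝ) • v ((n : ℝ) * (T / N)) - (4 : ℝ) • v (((n : ℝ) - 1) * (T / N))
            + v (((n : ℝ) - 2) * (T / N)))‖ ^ 2
      ≤ ∑ n ∈ Finset.Icc 2 N,
          ((9/2) * (∫ s in (((n:ℝ) - 1) * h)..((n:ℝ) * h), ‖v' s‖ ^ 2)
            + (1/2) * (∫ s in (((n:ℝ) - 2) * h)..(((n:ℝ) - 1) * h), ‖v' s‖ ^ 2)) := by
    rw [← hh, Finset.mul_sum]
    exact Finset.sum_le_sum term_bound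
  have hNcast : ((N - 1 : ℕ) : ℝ) = (N : ℝ) - 1 := by
    have h1N : 1 ≤ N := by omega
    push_cast [h1N]
    ring
  have hN2R : (2:ℝ) ≤ (N:ℝ) := by exact_mod_cast hN
  -- telescoping sum A
  have hadjA := intervalIntegral.sum_integral_adjacent_intervals
    (a := fun k : ℕ => ((k:ℝ) + 1) * h) (n := N - 1) (f := fun s => ‖v' s‖ ^ 2)
    (fun k hk => by
      refine gint _ _ (by positivity) ?_ ?_
      · exact mul_le_mul_of_nonneg_right (by push_cast; linarith) hpos.le
      · rw [← hNh]
        have hkN : ((k+1:ℕ):ℝ) + 1 ≤ (N:ℝ) := by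
          have hkk : k + 2 ≤ N := by omega
          have := (Nat.cast_le (α := ℝ)).2 hkk
          push_cast at this ⊢
          linarith
        exact mul_le_mul_of_nonneg_right hkN hpos.le)
  have sumA : (∑ n ∈ Finset.Icc 2 N, ∫ s in (((n:ℝ) - 1) * h)..((n:ℝ) * h), ‖v' s‖ ^ 2)
      = ∫ s in ((((0:ℕ):ℝ) + 1) * h)..(((((N-1:ℕ)):ℝ) + 1) * h), ‖v' s‖ ^ 2 := by
    refine Eq.trans ?_ hadjA
    rw [show Finset.Icc 2 N = Finset.Ico 2 (N+1) from rfl, Finset.sum_Ico_eq_sum_range,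
      show N + 1 - 2 = N - 1 from by omega]
    refine Finset.sum_congr rfl fun k _ => ?_
    push_cast
    ring_nf
  -- telescoping sum B
  have hadjB := intervalIntegral.sum_integral_adjacent_intervals
    (a := fun k : ℕ => (k:ℝ) * h) (n := N - 1) (f := fun s => ‖v' s‖ ^ 2)
    (fun k hk => by
      refine gint _ _ (by positivity) ?_ ?_
      · exact mul_le_mul_of_nonneg_right (by push_cast; linarith) hpos.le
      · rw [← hNh]
        have hkN : ((k+1:ℕ):ℝ) ≤ (N:ℝ) := by
          exact_mod_cast Nat.succ_le_of_lt (by omega)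
        exact mul_le_mul_of_nonneg_right hkN hpos.le)
  have sumB : (∑ n ∈ Finset.Icc 2 N, ∫ s in (((n:ℝ) - 2) * h)..(((n:ℝ) - 1) * h), ‖v' s‖ ^ 2)
      = ∫ s in (((0:ℕ):ℝ) * h)..((((N-1:ℕ)):ℝ) * h), ‖v' s‖ ^ 2 := by
    refine Eq.trans ?_ hadjB
    rw [show Finset.Icc 2 N = Finset.Ico 2 (N+1) from rfl, Finset.sum_Ico_eq_sum_range,
      show N + 1 - 2 = N - 1 from by omega]
    refine Finset.sum_congr rfl fun k _ => ?_
    push_cast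
    ring_nf
  -- bound the telescoped integrals by the full integral
  have e0A : (((0:ℕ):ℝ) + 1) * h = h := by norm_num
  have eNA : ((((N-1:ℕ)):ℝ) + 1) * h = T := by rw [hNcast, ← hNh]; ring
  have e0B : ((0:ℕ):ℝ) * h = 0 := by norm_num
  have hboundA : (∫ s in ((((0:ℕ):ℝ) + 1) * h)..(((((N-1:ℕ)):ℝ) + 1) * h), ‖v' s‖ ^ 2)
      ≤ ∫ s in (0:ℝ)..T, ‖v' s‖ ^ 2 := by
    rw [e0A, eNA]
    refine gmono h T hpos.le ?_ le_rfl
    rw [← hNh]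
    nlinarith
  have hboundB : (∫ s in (((0:ℕ):ℝ) * h)..((((N-1:ℕ)):ℝ) * h), ‖v' s‖ ^ 2)
      ≤ ∫ s in (0:ℝ)..T, ‖v' s‖ ^ 2 := by
    rw [e0B, hNcast]
    refine gmono 0 (((N:ℝ) - 1) * h) le_rfl (by nlinarith) ?_
    rw [← hNh]
    nlinarith
  -- conclusion
  calc (T / N) * ∑ n ∈ Finset.Icc 2 N,
        ‖(1 / (2 * (T / N))) •
            ((3 : ℝ) • v ((n : ℝ) * (T / N)) - (4 : ℝ) • v (((n : ℝ) - 1) * (T / N))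
              + v (((n : ℝ) - 2) * (T / N)))‖ ^ 2
      ≤ ∑ n ∈ Finset.Icc 2 N,
          ((9/2) * (∫ s in (((n:ℝ) - 1) * h)..((n:ℝ) * h), ‖v' s‖ ^ 2)
            + (1/2) * (∫ s in (((n:ℝ) - 2) * h)..(((n:ℝ) - 1) * h), ‖v' s‖ ^ 2)) := step1
    _ = (9/2) * (∑ n ∈ Finset.Icc 2 N, ∫ s in (((n:ℝ) - 1) * h)..((n:ℝ) * h), ‖v' s‖ ^ 2)
        + (1/2) * (∑ n ∈ Finset.Icc 2 N,
            ∫ s in (((n:ℝ) - 2) * h)..(((n:ℝ) - 1) * h), ‖v' s‖ ^ 2) := by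
          rw [Finset.sum_add_distrib, ← Finset.mul_sum, ← Finset.mul_sum]
    _ ≤ (9/2) * (∫ s in (0:ℝ)..T, ‖v' s‖ ^ 2) + (1/2) * (∫ s in (0:ℝ)..T, ‖v' s‖ ^ 2) := by
          rw [sumA, sumB]
          have hA' := mul_le_mul_of_nonneg_left hboundA (by norm_num : (0:ℝ) ≤ 9/2)
          have hB' := mul_le_mul_of_nonneg_left hboundB (by norm_num : (0:ℝ) ≤ 1/2)
          linarith
    _ = 5 * ∫ s in (0:ℝ)..T, ‖v' s‖ ^ 2 := by ring
end

section
/- Let E be a real Banach space. There exists a constant C > 0 such that for every T > 0, every natural number N ≥ 2, with Δt := T/N and tₙ := n·Δt, and every function v : ℝ → E that is twice continuously differentiable on [0, T] with second derivative v″, one has Δt⁵·Σ_{n=2}^{N} ‖(v(tₙ) − 2·v(t_{n−1}) + v(t_{n−2}))/Δt²‖² ≤ C·Δt⁴·∫_{0}^{T} ‖v″(s)‖² ds. -/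
open intervalIntegral

open MeasureTheory Set in
private lemma sq_intervalIntegral_le {f : ℝ → ℝ} {a b : ℝ} (hab : a ≤ b)
    (hf : ContinuousOn f (Set.Icc a b)) :
    (∫ s in a..b, f s) ^ 2 ≤ (b - a) * ∫ s in a..b, f s ^ 2 := by
  rcases eq_or_lt_of_le hab with rfl | hab'
  · simp
  have hba : (0:ℝ) < b - a := by linarith
  have h0 : volume (Set.Ioc a b) ≠ 0 := by
    simp [Real.volume_Ioc, ENNReal.ofReal_eq_zero]; linarith
  have hT : volume (Set.Ioc a b) ≠ ⊤ := by simp [Real.volume_Ioc]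
  have hfi : IntegrableOn f (Set.Ioc a b) :=
    (hf.integrableOn_Icc).mono_set Set.Ioc_subset_Icc_self
  have hgi : IntegrableOn (fun x => (f x) ^ 2) (Set.Ioc a b) :=
    ((hf.pow 2).integrableOn_Icc).mono_set Set.Ioc_subset_Icc_self
  have key := (even_two.convexOn_pow (𝕜 := ℝ)).map_set_average_le
    ((continuous_pow 2).continuousOn) isClosed_univ h0 hT
    (Filter.Eventually.of_forall fun x => Set.mem_univ _) hfi hgi
  rw [MeasureTheory.setAverage_eq, MeasureTheory.setAverage_eq,
    Real.volume_real_Ioc_of_le hab, smul_eq_mul, smul_eq_mul,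
    mul_pow] at key
  rw [intervalIntegral.integral_of_le hab, intervalIntegral.integral_of_le hab]
  have h2 := mul_le_mul_of_nonneg_left key (sq_nonneg (b - a))
  calc (∫ x in Set.Ioc a b, f x) ^ 2
      = (b-a)^2 * (((b-a)⁻¹)^2 * (∫ x in Set.Ioc a b, f x) ^ 2) := by
        field_simp
    _ ≤ (b-a)^2 * ((b-a)⁻¹ * ∫ x in Set.Ioc a b, (f x)^2) := h2
    _ = (b - a) * ∫ x in Set.Ioc a b, (f x)^2 := by
        field_simp

/-- FTC on subintervals of `[0,T]` for derivatives within `Icc 0 T`. -/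
private lemma ftc_sub {E : Type*} [NormedAddCommGroup E] [NormedSpace ℝ E] [CompleteSpace E]
    {T : ℝ} (f f' : ℝ → E)
    (hf : ∀ s ∈ Set.Icc (0:ℝ) T, HasDerivWithinAt f (f' s) (Set.Icc (0:ℝ) T) s)
    (hf' : ContinuousOn f' (Set.Icc (0:ℝ) T))
    {a b : ℝ} (ha : 0 ≤ a) (hab : a ≤ b) (hbT : b ≤ T) :
    ∫ s in a..b, f' s = f b - f a := by
  apply intervalIntegral.integral_eq_sub_of_hasDeriv_right_of_le hab
  · intro s hs
    exact (hf s ⟨ha.trans hs.1, hs.2.trans hbT⟩).continuousWithinAt.mono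
      (Set.Icc_subset_Icc ha hbT)
  · intro x hx
    have hx' : x ∈ Set.Icc (0:ℝ) T := ⟨by linarith [hx.1], by linarith [hx.2]⟩
    exact ((hf x hx').hasDerivAt
      (Icc_mem_nhds (by linarith [hx.1]) (by linarith [hx.2]))).hasDerivWithinAt
  · exact (hf'.mono (Set.Icc_subset_Icc ha hbT)).intervalIntegrable_of_Icc hab

set_option maxHeartbeats 1000000 in
/-- Summed form of estimate (3.6b): on the uniform partition tₙ = nΔt of [0,T],
    Δt⁵ Σ_{n=2}^N ‖(v(tₙ) - 2v(t_{n-1}) + v(t_{n-2}))/Δt²‖² ≤ C Δt⁴ ∫_0^T ‖v''‖². -/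
theorem bdf2_second_difference_sum_bound
    {E : Type*} [NormedAddCommGroup E] [NormedSpace ℝ E] [CompleteSpace E] :
    ∃ C : ℝ, 0 < C ∧
      ∀ (T : ℝ), 0 < T →
        ∀ (N : ℕ), 2 ≤ N →
          ∀ (v v' v'' : ℝ → E),
            (∀ s ∈ Set.Icc (0 : ℝ) T,
                HasDerivWithinAt v (v' s) (Set.Icc (0 : ℝ) T) s) →
            (∀ s ∈ Set.Icc (0 : ℝ) T,
                HasDerivWithinAt v' (v'' s) (Set.Icc (0 : ℝ) T) s) →
            ContinuousOn v'' (Set.Icc (0 : ℝ) T) →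
            (T / N) ^ 5 * ∑ n ∈ Finset.Icc 2 N,
                ‖(1 / (T / N) ^ 2) •
                    (v ((n : ℝ) * (T / N))
                      - (2 : ℝ) • v (((n : ℝ) - 1) * (T / N))
                      + v (((n : ℝ) - 2) * (T / N)))‖ ^ 2
              ≤ C * (T / N) ^ 4 * ∫ s in (0 : ℝ)..T, ‖v'' s‖ ^ 2 := by
  refine ⟨4, by norm_num, ?_⟩
  intro T hT N hN v v' v'' hv hv' hv''c
  set Δt : ℝ := T / N with hΔtdef
  have hN0 : (0:ℝ) < (N:ℝ) := by
    have : (2:ℝ) ≤ (N:ℝ) := by exact_mod_cast hN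
    linarith
  have hΔt : 0 < Δt := div_pos hT hN0
  have hNT : (N:ℝ) * Δt = T := by
    rw [hΔtdef]; field_simp
  have hv'c : ContinuousOn v' (Set.Icc 0 T) := fun s hs => (hv' s hs).continuousWithinAt
  have hnormc : ContinuousOn (fun s => ‖v'' s‖) (Set.Icc 0 T) := hv''c.norm
  have hsqc : ContinuousOn (fun s => ‖v'' s‖ ^ 2) (Set.Icc 0 T) := hv''c.norm.pow 2
  -- interval integrability of ‖v''‖ and ‖v''‖² on subintervals of [0,T]
  have hIntN : ∀ {a b : ℝ}, 0 ≤ a → a ≤ b → b ≤ T →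
      IntervalIntegrable (fun s => ‖v'' s‖) MeasureTheory.volume a b := fun ha hab hbT =>
    (hnormc.mono (Set.Icc_subset_Icc ha hbT)).intervalIntegrable_of_Icc hab
  have hIntS : ∀ {a b : ℝ}, 0 ≤ a → a ≤ b → b ≤ T →
      IntervalIntegrable (fun s => ‖v'' s‖ ^ 2) MeasureTheory.volume a b := fun ha hab hbT =>
    (hsqc.mono (Set.Icc_subset_Icc ha hbT)).intervalIntegrable_of_Icc hab
  have hsqnn : (0:ℝ → ℝ) ≤ᵐ[MeasureTheory.volume.restrict (Set.Ioc (0:ℝ) T)]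
      (fun s => ‖v'' s‖ ^ 2) :=
    Filter.Eventually.of_forall fun x => by positivity
  -- the key per-step estimate
  set J : ℕ → ℝ := fun n =>
    ∫ s in (((n:ℝ) - 2) * Δt)..((n:ℝ) * Δt), ‖v'' s‖ ^ 2 with hJ
  have key : ∀ n ∈ Finset.Icc 2 N,
      ‖v ((n:ℝ) * Δt) - (2:ℝ) • v (((n:ℝ) - 1) * Δt) + v (((n:ℝ) - 2) * Δt)‖ ^ 2
        ≤ 2 * Δt ^ 3 * J n := by
    intro n hn
    rw [Finset.mem_Icc] at hn
    have hn2 : (2:ℝ) ≤ (n:ℝ) := by exact_mod_cast hn.1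
    have hnN : (n:ℝ) ≤ (N:ℝ) := by exact_mod_cast hn.2
    set a : ℝ := ((n:ℝ) - 2) * Δt with haDef
    set m : ℝ := ((n:ℝ) - 1) * Δt with hmDef
    set b : ℝ := (n:ℝ) * Δt with hbDef
    have ha0 : 0 ≤ a := by nlinarith
    have ham : a ≤ m := by nlinarith
    have hmb : m ≤ b := by nlinarith
    have hbT : b ≤ T := by nlinarith
    have hm0 : 0 ≤ m := ha0.trans ham
    have hab : a ≤ b := ham.trans hmb
    have hmT : m ≤ T := hmb.trans hbT
    have haT : a ≤ T := hab.trans hbT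
    -- first differences as integrals of v'
    have h1 : v b - v m = ∫ s in m..b, v' s := (ftc_sub v v' hv hv'c hm0 hmb hbT).symm
    have h2 : v m - v a = ∫ s in a..m, v' s := (ftc_sub v v' hv hv'c ha0 ham hmT).symm
    have hshift : (∫ s in a..m, v' s) = ∫ s in m..b, v' (s - Δt) := by
      rw [intervalIntegral.integral_comp_sub_right (fun s => v' s) Δt]
      congr 1
      · rw [hmDef, haDef]; ring
      · rw [hbDef, hmDef]; ring
    -- second difference as a single integral
    have hd : v b - (2:ℝ) • v m + v a = ∫ s in m..b, (v' s - v' (s - Δt)) := by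
      have hint1 : IntervalIntegrable v' MeasureTheory.volume m b :=
        (hv'c.mono (Set.Icc_subset_Icc hm0 hbT)).intervalIntegrable_of_Icc hmb
      have hint2 : IntervalIntegrable (fun s => v' (s - Δt)) MeasureTheory.volume m b := by
        apply ContinuousOn.intervalIntegrable_of_Icc hmb
        apply (hv'c.mono (Set.Icc_subset_Icc ha0 hmT)).comp
          (continuousOn_id.sub continuousOn_const)
        intro x hx
        constructor <;> simp only [Pi.sub_apply, id_eq] <;> nlinarith [hx.1, hx.2]
      rw [intervalIntegral.integral_sub hint1 hint2, ← h1, ← hshift, ← h2]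
      module
    set I : ℝ := ∫ y in a..b, ‖v'' y‖ with hI
    have hInn : 0 ≤ I :=
      intervalIntegral.integral_nonneg hab fun x _ => norm_nonneg _
    -- pointwise bound on the increment of v'
    have hptw : ∀ s ∈ Set.Icc m b, ‖v' s - v' (s - Δt)‖ ≤ I := by
      intro s hs
      have hs1 : a ≤ s - Δt := by
        have := hs.1; rw [hmDef] at this; nlinarith [hs.1]
      have hs0 : 0 ≤ s - Δt := ha0.trans hs1
      have hssub : s - Δt ≤ s := by linarith
      have hsT : s ≤ T := hs.2.trans hbT
      have heq : v' s - v' (s - Δt) = ∫ y in (s - Δt)..s, v'' y :=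
        (ftc_sub v' v'' hv' hv''c hs0 hssub hsT).symm
      rw [heq]
      calc ‖∫ y in (s - Δt)..s, v'' y‖ ≤ ∫ y in (s - Δt)..s, ‖v'' y‖ :=
            intervalIntegral.norm_integral_le_integral_norm hssub
        _ ≤ I := by
            apply intervalIntegral.integral_mono_interval hs1 hssub hs.2
              (Filter.Eventually.of_forall fun x => norm_nonneg _)
              (hIntN ha0 hab hbT)
    -- norm of the second difference
    have hdn : ‖v b - (2:ℝ) • v m + v a‖ ≤ Δt * I := by
      rw [hd]
      calc ‖∫ s in m..b, (v' s - v' (s - Δt))‖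
          ≤ ∫ s in m..b, ‖v' s - v' (s - Δt)‖ :=
            intervalIntegral.norm_integral_le_integral_norm hmb
        _ ≤ ∫ _ in m..b, I := by
            apply intervalIntegral.integral_mono_on hmb _ intervalIntegrable_const hptw
            · apply ContinuousOn.intervalIntegrable_of_Icc hmb
              apply ContinuousOn.norm
              apply ContinuousOn.sub (hv'c.mono (Set.Icc_subset_Icc hm0 hbT))
              apply (hv'c.mono (Set.Icc_subset_Icc ha0 hmT)).comp
                (continuousOn_id.sub continuousOn_const)
              intro x hx
              constructor <;> simp only [Pi.sub_apply, id_eq] <;> nlinarith [hx.1, hx.2]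
        _ = Δt * I := by
            rw [intervalIntegral.integral_const, smul_eq_mul]
            congr 1
            rw [hbDef, hmDef]; ring
    -- Cauchy–Schwarz
    have hcs : I ^ 2 ≤ (2 * Δt) * J n := by
      have hba : b - a = 2 * Δt := by rw [hbDef, haDef]; ring
      have := sq_intervalIntegral_le hab (hnormc.mono (Set.Icc_subset_Icc ha0 hbT))
      rw [hba] at this
      exact this
    calc ‖v b - (2:ℝ) • v m + v a‖ ^ 2 ≤ (Δt * I) ^ 2 := by
          apply pow_le_pow_left₀ (norm_nonneg _) hdn
      _ = Δt ^ 2 * I ^ 2 := by ring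
      _ ≤ Δt ^ 2 * ((2 * Δt) * J n) := by
          apply mul_le_mul_of_nonneg_left hcs (by positivity)
      _ = 2 * Δt ^ 3 * J n := by ring
  -- telescoping bound on ∑ J n
  have hsumJ : ∑ n ∈ Finset.Icc 2 N, J n ≤ 2 * ∫ s in (0:ℝ)..T, ‖v'' s‖ ^ 2 := by
    have hg0 : ∀ k : ℕ, (0:ℝ) ≤ (k:ℝ) * Δt := fun k => by positivity
    have hgle : ∀ {j k : ℕ}, j ≤ k → (j:ℝ) * Δt ≤ (k:ℝ) * Δt := fun {j k} hjk => by
      have : (j:ℝ) ≤ (k:ℝ) := by exact_mod_cast hjk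
      nlinarith
    have hgT : ∀ {k : ℕ}, k ≤ N → (k:ℝ) * Δt ≤ T := fun {k} hk => by
      rw [← hNT]; exact hgle hk
    -- split each J n
    have hsplit : ∀ n ∈ Finset.Icc 2 N, J n =
        (∫ s in (((n:ℝ) - 2) * Δt)..(((n:ℝ) - 1) * Δt), ‖v'' s‖ ^ 2)
          + ∫ s in (((n:ℝ) - 1) * Δt)..((n:ℝ) * Δt), ‖v'' s‖ ^ 2 := by
      intro n hn
      rw [Finset.mem_Icc] at hn
      have hn2 : (2:ℝ) ≤ (n:ℝ) := by exact_mod_cast hn.1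
      have hnN : (n:ℝ) ≤ (N:ℝ) := by exact_mod_cast hn.2
      have ha0 : 0 ≤ ((n:ℝ) - 2) * Δt := by nlinarith
      have ham : ((n:ℝ) - 2) * Δt ≤ ((n:ℝ) - 1) * Δt := by nlinarith
      have hmb : ((n:ℝ) - 1) * Δt ≤ (n:ℝ) * Δt := by nlinarith
      have hbT : (n:ℝ) * Δt ≤ T := by rw [← hNT]; nlinarith
      rw [hJ]
      exact (intervalIntegral.integral_add_adjacent_intervals
        (hIntS ha0 ham (by linarith))
        (hIntS (ha0.trans ham) hmb hbT)).symm
    rw [Finset.sum_congr rfl hsplit, Finset.sum_add_distrib]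
    -- each of the two telescoping sums is at most ∫₀ᵀ
    have htel : ∀ (c : ℕ → ℝ), (∀ i, i < N - 1 →
          c i = ((i:ℝ)) * Δt + c 0 ∧ True) → True := fun _ _ => trivial
    have hIcc : Finset.Icc 2 N = Finset.Ico 2 (N + 1) := by
      rw [Finset.Ico_add_one_right_eq_Icc]
    have hbound : ∀ (off : ℕ), off ≤ 1 →
        (∑ n ∈ Finset.Icc 2 N,
            ∫ s in (((n:ℝ) - 2 + off) * Δt)..(((n:ℝ) - 1 + off) * Δt), ‖v'' s‖ ^ 2)
          ≤ ∫ s in (0:ℝ)..T, ‖v'' s‖ ^ 2 := by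
      intro off hoff
      have hterm : ∀ i ∈ Finset.range (N - 1),
          (∫ s in (((2 + i : ℕ):ℝ) - 2 + off) * Δt..((((2 + i : ℕ):ℝ)) - 1 + off) * Δt,
              ‖v'' s‖ ^ 2)
            = ∫ s in (((i + off : ℕ):ℝ)) * Δt..(((i + 1 + off : ℕ):ℝ)) * Δt,
              ‖v'' s‖ ^ 2 := by
        intro i _
        congr 1 <;> push_cast <;> ring
      rw [hIcc, Finset.sum_Ico_eq_sum_range]
      have hN1 : N + 1 - 2 = N - 1 := by omega
      rw [hN1, Finset.sum_congr rfl hterm,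
        intervalIntegral.sum_integral_adjacent_intervals
          (a := fun k => ((k + off : ℕ):ℝ) * Δt) (n := N - 1)
          (fun k hk => hIntS (hg0 _) (hgle (by omega)) (hgT (by omega)))]
      apply intervalIntegral.integral_mono_interval (hg0 _)
        (hgle (by omega)) (hgT (by omega)) hsqnn (hIntS le_rfl hT.le le_rfl)
    have h1 := hbound 0 (by omega)
    have h2 := hbound 1 (by omega)
    simp only [Nat.cast_zero, Nat.cast_one, add_zero] at h1 h2
    have e1 : (∑ n ∈ Finset.Icc 2 N,
        ∫ s in (((n:ℝ) - 2) * Δt)..(((n:ℝ) - 1) * Δt), ‖v'' s‖ ^ 2)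
        ≤ ∫ s in (0:ℝ)..T, ‖v'' s‖ ^ 2 := h1
    have e2 : (∑ n ∈ Finset.Icc 2 N,
        ∫ s in (((n:ℝ) - 1) * Δt)..((n:ℝ) * Δt), ‖v'' s‖ ^ 2)
        ≤ ∫ s in (0:ℝ)..T, ‖v'' s‖ ^ 2 := by
      have : ∀ n ∈ Finset.Icc 2 N,
          (∫ s in (((n:ℝ) - 1) * Δt)..((n:ℝ) * Δt), ‖v'' s‖ ^ 2)
            = ∫ s in (((n:ℝ) - 2 + 1) * Δt)..(((n:ℝ) - 1 + 1) * Δt), ‖v'' s‖ ^ 2 := by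
        intro n _; congr 1 <;> ring
      rw [Finset.sum_congr rfl this]; exact h2
    linarith
  -- final assembly
  have hrw : ∀ n : ℕ,
      ‖(1 / Δt ^ 2) • (v ((n:ℝ) * Δt) - (2:ℝ) • v (((n:ℝ) - 1) * Δt)
          + v (((n:ℝ) - 2) * Δt))‖ ^ 2
        = (1 / Δt ^ 2) ^ 2 *
          ‖v ((n:ℝ) * Δt) - (2:ℝ) • v (((n:ℝ) - 1) * Δt) + v (((n:ℝ) - 2) * Δt)‖ ^ 2 := by
    intro n
    rw [norm_smul, Real.norm_eq_abs, abs_of_pos (by positivity), mul_pow]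
  simp only [hrw]
  rw [← Finset.mul_sum]
  have hsum1 : ∑ n ∈ Finset.Icc 2 N,
      ‖v ((n:ℝ) * Δt) - (2:ℝ) • v (((n:ℝ) - 1) * Δt) + v (((n:ℝ) - 2) * Δt)‖ ^ 2
      ≤ 2 * Δt ^ 3 * (2 * ∫ s in (0:ℝ)..T, ‖v'' s‖ ^ 2) := by
    calc ∑ n ∈ Finset.Icc 2 N,
        ‖v ((n:ℝ) * Δt) - (2:ℝ) • v (((n:ℝ) - 1) * Δt) + v (((n:ℝ) - 2) * Δt)‖ ^ 2
        ≤ ∑ n ∈ Finset.Icc 2 N, 2 * Δt ^ 3 * J n := Finset.sum_le_sum key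
      _ = 2 * Δt ^ 3 * ∑ n ∈ Finset.Icc 2 N, J n := by rw [Finset.mul_sum]
      _ ≤ 2 * Δt ^ 3 * (2 * ∫ s in (0:ℝ)..T, ‖v'' s‖ ^ 2) := by
          apply mul_le_mul_of_nonneg_left hsumJ (by positivity)
  calc Δt ^ 5 * ((1 / Δt ^ 2) ^ 2 * ∑ n ∈ Finset.Icc 2 N,
        ‖v ((n:ℝ) * Δt) - (2:ℝ) • v (((n:ℝ) - 1) * Δt) + v (((n:ℝ) - 2) * Δt)‖ ^ 2)
      = Δt * ∑ n ∈ Finset.Icc 2 N,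
        ‖v ((n:ℝ) * Δt) - (2:ℝ) • v (((n:ℝ) - 1) * Δt) + v (((n:ℝ) - 2) * Δt)‖ ^ 2 := by
        field_simp
    _ ≤ Δt * (2 * Δt ^ 3 * (2 * ∫ s in (0:ℝ)..T, ‖v'' s‖ ^ 2)) :=
        mul_le_mul_of_nonneg_left hsum1 hΔt.le
    _ = 4 * Δt ^ 4 * ∫ s in (0:ℝ)..T, ‖v'' s‖ ^ 2 := by ring
end

section
/- Let E be a real Banach space. There exists a constant C > 0 such that for every T > 0, every natural number N ≥ 2, with Δt := T/N and tₙ := n·Δt, and every function v : ℝ → E that is three times continuously differentiable on [0, T] with first derivative v′ and third derivative v‴, one has Δt·Σ_{n=2}^{N} ‖v′(tₙ) − (3·v(tₙ) − 4·v(t_{n−1}) + v(t_{n−2}))/(2Δt)‖² ≤ C·Δt⁴·∫_{0}^{T} ‖v‴(s)‖² ds. -/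
open intervalIntegral

open MeasureTheory in
private lemma bdf2_cs_interval {a b : ℝ} (hab : a ≤ b) {φ : ℝ → ℝ}
    (hφ : ContinuousOn φ (Set.Icc a b)) (hnn : ∀ s, 0 ≤ φ s) :
    (∫ s in a..b, φ s) ^ 2 ≤ (b - a) * ∫ s in a..b, φ s ^ 2 := by
  set μ := MeasureTheory.volume.restrict (Set.Ioc a b) with hμ
  haveI : IsFiniteMeasure μ := ⟨by
    rw [hμ, Measure.restrict_apply_univ]
    exact measure_Ioc_lt_top⟩
  have hmeas : AEStronglyMeasurable φ μ :=
    (hφ.mono Set.Ioc_subset_Icc_self).aestronglyMeasurable measurableSet_Ioc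
  obtain ⟨C, hC⟩ := IsCompact.exists_bound_of_continuousOn isCompact_Icc hφ
  have hmem : MemLp φ (ENNReal.ofReal 2) μ := by
    refine MemLp.of_bound hmeas C ?_
    refine (ae_restrict_iff' measurableSet_Ioc).2 (Filter.Eventually.of_forall ?_)
    exact fun x hx => hC x (Set.Ioc_subset_Icc_self hx)
  have hmem1 : MemLp (fun _ : ℝ => (1:ℝ)) (ENNReal.ofReal 2) μ := memLp_const 1
  have hconj : (2:ℝ).HolderConjugate 2 := Real.holderConjugate_iff.mpr ⟨one_lt_two, by norm_num⟩
  have H := integral_mul_le_Lp_mul_Lq_of_nonneg hconj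
    (Filter.Eventually.of_forall (fun _ => zero_le_one))
    (Filter.Eventually.of_forall hnn) hmem1 hmem
  simp only [one_mul, Real.one_rpow] at H
  have h1 : ∫ _ : ℝ, (1:ℝ) ∂μ = b - a := by
    simp [hμ, Real.volume_Ioc, ENNReal.toReal_ofReal (sub_nonneg.2 hab), hab]
  rw [h1] at H
  have hpow : ∀ x : ℝ, x ^ (2:ℝ) = x ^ 2 := fun x => by
    rw [show (2:ℝ) = ((2:ℕ):ℝ) by norm_num, Real.rpow_natCast]
  simp only [hpow] at H
  have hIab : ∫ s in a..b, φ s = ∫ x, φ x ∂μ := by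
    rw [intervalIntegral.integral_of_le hab]
  have hIab2 : ∫ s in a..b, φ s ^ 2 = ∫ x, φ x ^ 2 ∂μ := by
    rw [intervalIntegral.integral_of_le hab]
  rw [hIab, hIab2]
  have hA : 0 ≤ ∫ x, φ x ∂μ := integral_nonneg hnn
  have hB : 0 ≤ ∫ x, φ x ^ 2 ∂μ := integral_nonneg fun x => sq_nonneg _
  have hsq : ∀ x : ℝ, 0 ≤ x → (x ^ ((1:ℝ)/2)) ^ 2 = x := fun x hx => by
    rw [← Real.rpow_natCast (x ^ ((1:ℝ)/2)) 2, ← Real.rpow_mul hx]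
    norm_num
  calc (∫ x, φ x ∂μ) ^ 2
      ≤ ((b - a) ^ ((1:ℝ)/2) * (∫ x, φ x ^ 2 ∂μ) ^ ((1:ℝ)/2)) ^ 2 := by
        apply pow_le_pow_left₀ hA H
    _ = (b - a) * ∫ x, φ x ^ 2 ∂μ := by
        rw [mul_pow, hsq _ (sub_nonneg.2 hab), hsq _ hB]

open MeasureTheory in
private lemma bdf2_taylor2 {E : Type*} [NormedAddCommGroup E] [NormedSpace ℝ E] [CompleteSpace E]
    {T a b : ℝ} (h0 : 0 ≤ a) (hab : a ≤ b) (hbT : b ≤ T)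
    {v v' v'' v''' : ℝ → E}
    (hv : ∀ s ∈ Set.Icc (0 : ℝ) T, HasDerivWithinAt v (v' s) (Set.Icc (0 : ℝ) T) s)
    (hv' : ∀ s ∈ Set.Icc (0 : ℝ) T, HasDerivWithinAt v' (v'' s) (Set.Icc (0 : ℝ) T) s)
    (hv'' : ∀ s ∈ Set.Icc (0 : ℝ) T, HasDerivWithinAt v'' (v''' s) (Set.Icc (0 : ℝ) T) s)
    (hc : ContinuousOn v''' (Set.Icc (0 : ℝ) T)) :
    v a = v b + (a - b) • v' b + ((a - b) ^ 2 / 2) • v'' b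
        - ∫ s in a..b, ((a - s) ^ 2 / 2) • v''' s := by
  have hsub : Set.Icc a b ⊆ Set.Icc (0 : ℝ) T :=
    Set.Icc_subset_Icc h0 hbT
  set G : ℝ → E := fun s => v s + (a - s) • v' s + ((a - s) ^ 2 / 2) • v'' s with hG
  have hcv : ContinuousOn v (Set.Icc (0:ℝ) T) := fun s hs => (hv s hs).continuousWithinAt
  have hcv' : ContinuousOn v' (Set.Icc (0:ℝ) T) := fun s hs => (hv' s hs).continuousWithinAt
  have hcv'' : ContinuousOn v'' (Set.Icc (0:ℝ) T) := fun s hs => (hv'' s hs).continuousWithinAt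
  have hGcont : ContinuousOn G (Set.Icc a b) := by
    apply ContinuousOn.add
    apply ContinuousOn.add
    · exact hcv.mono hsub
    · exact ((continuous_const.sub continuous_id).continuousOn).smul (hcv'.mono hsub)
    · exact ((((continuous_const.sub continuous_id).pow 2).div_const 2).continuousOn).smul
        (hcv''.mono hsub)
  have hGderiv : ∀ s ∈ Set.Ioo a b,
      HasDerivWithinAt G (((a - s) ^ 2 / 2) • v''' s) (Set.Ioi s) s := by
    intro s hs
    have hsmem : s ∈ Set.Icc (0:ℝ) T := hsub (Set.Ioo_subset_Icc_self hs)
    have hnbhd : Set.Icc (0:ℝ) T ∈ nhds s :=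
      Icc_mem_nhds (lt_of_le_of_lt h0 hs.1) (lt_of_lt_of_le hs.2 hbT)
    have h1 : HasDerivAt v (v' s) s := (hv s hsmem).hasDerivAt hnbhd
    have h2 : HasDerivAt v' (v'' s) s := (hv' s hsmem).hasDerivAt hnbhd
    have h3 : HasDerivAt v'' (v''' s) s := (hv'' s hsmem).hasDerivAt hnbhd
    have hc1 : HasDerivAt (fun y : ℝ => a - y) (-1 : ℝ) s := by
      simpa using (hasDerivAt_id s).const_sub a
    have hc2 : HasDerivAt (fun y : ℝ => (a - y) ^ 2 / 2) (-(a - s)) s := by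
      have := (hc1.pow 2).div_const 2
      exact this.congr_deriv (by push_cast; ring)
    have hD : HasDerivAt G
        (v' s + ((a - s) • v'' s + (-1 : ℝ) • v' s)
          + (((a - s) ^ 2 / 2) • v''' s + (-(a - s)) • v'' s)) s :=
      (h1.add (hc1.smul h2)).add (hc2.smul h3)
    have heq : v' s + ((a - s) • v'' s + (-1 : ℝ) • v' s)
          + (((a - s) ^ 2 / 2) • v''' s + (-(a - s)) • v'' s)
        = ((a - s) ^ 2 / 2) • v''' s := by
      module
    rw [heq] at hD
    exact hD.hasDerivWithinAt
  have hint : IntervalIntegrable (fun s => ((a - s) ^ 2 / 2) • v''' s) volume a b := by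
    apply ContinuousOn.intervalIntegrable
    rw [Set.uIcc_of_le hab]
    exact ((((continuous_const.sub continuous_id).pow 2).div_const 2).continuousOn).smul
      (hc.mono hsub)
  have hFTC := intervalIntegral.integral_eq_sub_of_hasDeriv_right_of_le hab hGcont hGderiv hint
  have hGa : G a = v a := by simp [hG]
  have hGb : G b = v b + (a - b) • v' b + ((a - b) ^ 2 / 2) • v'' b := rfl
  rw [hGa, hGb] at hFTC
  rw [hFTC]
  abel

set_option maxHeartbeats 1000000

/-- Summed BDF2 truncation error bound, from estimate (3.6c): on the uniform
    partition tₙ = nΔt of [0,T],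
    Δt Σ_{n=2}^N ‖v'(tₙ) - (3v(tₙ) - 4v(t_{n-1}) + v(t_{n-2}))/(2Δt)‖²
      ≤ C Δt⁴ ∫_0^T ‖v'''‖². -/
theorem bdf2_truncation_error_sum_bound
    {E : Type*} [NormedAddCommGroup E] [NormedSpace ℝ E] [CompleteSpace E] :
    ∃ C : ℝ, 0 < C ∧
      ∀ (T : ℝ), 0 < T →
        ∀ (N : ℕ), 2 ≤ N →
          ∀ (v v' v'' v''' : ℝ → E),
            (∀ s ∈ Set.Icc (0 : ℝ) T,
                HasDerivWithinAt v (v' s) (Set.Icc (0 : ℝ) T) s) →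
            (∀ s ∈ Set.Icc (0 : ℝ) T,
                HasDerivWithinAt v' (v'' s) (Set.Icc (0 : ℝ) T) s) →
            (∀ s ∈ Set.Icc (0 : ℝ) T,
                HasDerivWithinAt v'' (v''' s) (Set.Icc (0 : ℝ) T) s) →
            ContinuousOn v''' (Set.Icc (0 : ℝ) T) →
            (T / N) * ∑ n ∈ Finset.Icc 2 N,
                ‖v' ((n : ℝ) * (T / N))
                    - (1 / (2 * (T / N))) •
                        ((3 : ℝ) • v ((n : ℝ) * (T / N))
                          - (4 : ℝ) • v (((n : ℝ) - 1) * (T / N))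
                          + v (((n : ℝ) - 2) * (T / N)))‖ ^ 2
              ≤ C * (T / N) ^ 4 * ∫ s in (0 : ℝ)..T, ‖v''' s‖ ^ 2 := by
  refine ⟨16, by norm_num, ?_⟩
  intro T hT N hN v v' v'' v''' hv hv' hv'' hc
  set h : ℝ := T / N with hh
  have hN0 : (0:ℝ) < N := by
    have : (0:ℕ) < N := by omega
    exact_mod_cast this
  have hh0 : (0:ℝ) < h := div_pos hT hN0
  have hne : h ≠ 0 := ne_of_gt hh0
  have hNne : (N:ℝ) ≠ 0 := ne_of_gt hN0
  have hNh : (N:ℝ) * h = T := by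
    rw [hh]; field_simp
  have hφc : ContinuousOn (fun s => ‖v''' s‖) (Set.Icc (0:ℝ) T) := hc.norm
  have hgc : ContinuousOn (fun s => ‖v''' s‖ ^ 2) (Set.Icc (0:ℝ) T) := hφc.pow 2
  have hφint : ∀ a b : ℝ, 0 ≤ a → a ≤ b → b ≤ T →
      IntervalIntegrable (fun s => ‖v''' s‖) MeasureTheory.volume a b := by
    intro a b h0 hab hbT
    apply ContinuousOn.intervalIntegrable
    rw [Set.uIcc_of_le hab]
    exact hφc.mono (Set.Icc_subset_Icc h0 hbT)
  have hgint : ∀ a b : ℝ, 0 ≤ a → a ≤ b → b ≤ T →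
      IntervalIntegrable (fun s => ‖v''' s‖ ^ 2) MeasureTheory.volume a b := by
    intro a b h0 hab hbT
    apply ContinuousOn.intervalIntegrable
    rw [Set.uIcc_of_le hab]
    exact hgc.mono (Set.Icc_subset_Icc h0 hbT)
  -- termwise bound
  have key : ∀ n ∈ Finset.Icc 2 N,
      ‖v' ((n : ℝ) * h)
          - (1 / (2 * h)) •
              ((3 : ℝ) • v ((n : ℝ) * h)
                - (4 : ℝ) • v (((n : ℝ) - 1) * h)
                + v (((n : ℝ) - 2) * h))‖ ^ 2
        ≤ 8 * h ^ 3 * ∫ s in (((n:ℝ) - 2) * h)..((n:ℝ) * h), ‖v''' s‖ ^ 2 := by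
    intro n hn
    rw [Finset.mem_Icc] at hn
    have hn2 : (2:ℝ) ≤ (n:ℝ) := by exact_mod_cast hn.1
    have hnN : (n:ℝ) ≤ (N:ℝ) := by exact_mod_cast hn.2
    set b : ℝ := (n:ℝ) * h with hb
    set a1 : ℝ := ((n:ℝ) - 1) * h with ha1
    set a2 : ℝ := ((n:ℝ) - 2) * h with ha2
    have h0a2 : 0 ≤ a2 := mul_nonneg (by linarith) hh0.le
    have h0a1 : 0 ≤ a1 := mul_nonneg (by linarith) hh0.le
    have ha2a1 : a2 ≤ a1 := by rw [ha1, ha2]; nlinarith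
    have ha1b : a1 ≤ b := by rw [ha1, hb]; nlinarith
    have ha2b : a2 ≤ b := ha2a1.trans ha1b
    have hbT : b ≤ T := by
      rw [hb, ← hNh]
      exact mul_le_mul_of_nonneg_right hnN hh0.le
    have ha1T : a1 ≤ T := ha1b.trans hbT
    have e1 := bdf2_taylor2 (a := a1) (b := b) h0a1 ha1b hbT hv hv' hv'' hc
    have e2 := bdf2_taylor2 (a := a2) (b := b) h0a2 ha2b hbT hv hv' hv'' hc
    set I1 : E := ∫ s in a1..b, ((a1 - s) ^ 2 / 2) • v''' s with hI1
    set I2 : E := ∫ s in a2..b, ((a2 - s) ^ 2 / 2) • v''' s with hI2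
    have keyid : v' b - (1 / (2 * h)) • ((3 : ℝ) • v b - (4 : ℝ) • v a1 + v a2)
        = (1 / (2 * h)) • (I2 - (4:ℝ) • I1) := by
      rw [e1, e2, ha1, ha2, hb]
      match_scalars <;> field_simp <;> ring
    rw [keyid]
    set J : ℝ := ∫ s in a2..b, ‖v''' s‖ with hJ
    have hJsplit : J = (∫ s in a2..a1, ‖v''' s‖) + ∫ s in a1..b, ‖v''' s‖ := by
      rw [hJ, ← intervalIntegral.integral_add_adjacent_intervals
        (hφint a2 a1 h0a2 ha2a1 ha1T) (hφint a1 b h0a1 ha1b hbT)]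
    have hJ1nn : 0 ≤ ∫ s in a2..a1, ‖v''' s‖ :=
      intervalIntegral.integral_nonneg ha2a1 fun u _ => norm_nonneg _
    have hJ2nn : 0 ≤ ∫ s in a1..b, ‖v''' s‖ :=
      intervalIntegral.integral_nonneg ha1b fun u _ => norm_nonneg _
    have hJnn : 0 ≤ J := by rw [hJsplit]; positivity
    have hbI1 : ‖I1‖ ≤ (h ^ 2 / 2) * J := by
      have hb1 : ‖I1‖ ≤ |∫ s in a1..b, (h ^ 2 / 2) * ‖v''' s‖| := by
        apply intervalIntegral.norm_integral_le_abs_of_norm_le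
        · refine (MeasureTheory.ae_restrict_iff' measurableSet_uIoc).2
            (Filter.Eventually.of_forall ?_)
          intro t ht
          rw [Set.uIoc_of_le ha1b] at ht
          rw [norm_smul]
          have habs : ‖(a1 - t) ^ 2 / 2‖ = (a1 - t) ^ 2 / 2 :=
            Real.norm_of_nonneg (by positivity)
          rw [habs]
          have hba1 : b - a1 = h := by rw [hb, ha1]; ring
          have ht1 : 0 ≤ t - a1 := by linarith [ht.1.le]
          have ht2 : t - a1 ≤ h := by linarith [ht.2]
          have h1 : (a1 - t) ^ 2 ≤ h ^ 2 := by nlinarith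
          apply mul_le_mul_of_nonneg_right _ (norm_nonneg (v''' t))
          linarith
        · exact (hφint a1 b h0a1 ha1b hbT).const_mul _
      rw [intervalIntegral.integral_const_mul, abs_of_nonneg (by positivity)] at hb1
      calc ‖I1‖ ≤ h ^ 2 / 2 * ∫ s in a1..b, ‖v''' s‖ := hb1
        _ ≤ (h ^ 2 / 2) * J := by
            rw [hJsplit]
            nlinarith [mul_nonneg (by positivity : (0:ℝ) ≤ h ^ 2 / 2) hJ1nn]
    have hbI2 : ‖I2‖ ≤ (2 * h ^ 2) * J := by
      have hb2 : ‖I2‖ ≤ |∫ s in a2..b, (2 * h ^ 2) * ‖v''' s‖| := by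
        apply intervalIntegral.norm_integral_le_abs_of_norm_le
        · refine (MeasureTheory.ae_restrict_iff' measurableSet_uIoc).2
            (Filter.Eventually.of_forall ?_)
          intro t ht
          rw [Set.uIoc_of_le ha2b] at ht
          rw [norm_smul]
          have habs : ‖(a2 - t) ^ 2 / 2‖ = (a2 - t) ^ 2 / 2 :=
            Real.norm_of_nonneg (by positivity)
          rw [habs]
          have hba2 : b - a2 = 2 * h := by rw [hb, ha2]; ring
          have ht1 : 0 ≤ t - a2 := by linarith [ht.1.le]
          have ht2 : t - a2 ≤ 2 * h := by linarith [ht.2]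
          have h1 : (a2 - t) ^ 2 ≤ (2 * h) ^ 2 := by nlinarith
          apply mul_le_mul_of_nonneg_right _ (norm_nonneg (v''' t))
          have : (2 * h) ^ 2 / 2 = 2 * h ^ 2 := by ring
          linarith
        · exact (hφint a2 b h0a2 ha2b hbT).const_mul _
      rw [intervalIntegral.integral_const_mul, abs_of_nonneg (by positivity)] at hb2
      exact hb2.trans (le_of_eq (by rw [hJ]))
    have hτ : ‖(1 / (2 * h)) • (I2 - (4:ℝ) • I1)‖ ≤ 2 * h * J := by
      rw [norm_smul, Real.norm_eq_abs, abs_of_pos (by positivity)]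
      have hsub : ‖I2 - (4:ℝ) • I1‖ ≤ ‖I2‖ + 4 * ‖I1‖ := by
        calc ‖I2 - (4:ℝ) • I1‖ ≤ ‖I2‖ + ‖(4:ℝ) • I1‖ := norm_sub_le _ _
          _ = ‖I2‖ + 4 * ‖I1‖ := by rw [norm_smul]; norm_num
      calc (1 / (2 * h)) * ‖I2 - (4:ℝ) • I1‖
          ≤ (1 / (2 * h)) * ((2 * h ^ 2) * J + 4 * ((h ^ 2 / 2) * J)) := by
            apply mul_le_mul_of_nonneg_left _ (by positivity)
            nlinarith
        _ = 2 * h * J := by field_simp; ring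
    have hCS : J ^ 2 ≤ (2 * h) * ∫ s in a2..b, ‖v''' s‖ ^ 2 := by
      rw [hJ]
      have hcs := bdf2_cs_interval ha2b (hφc.mono (Set.Icc_subset_Icc h0a2 hbT))
        (fun s => norm_nonneg (v''' s))
      have hba : b - a2 = 2 * h := by rw [hb, ha2]; ring
      rw [hba] at hcs
      exact hcs
    calc ‖(1 / (2 * h)) • (I2 - (4:ℝ) • I1)‖ ^ 2
        ≤ (2 * h * J) ^ 2 := pow_le_pow_left₀ (norm_nonneg _) hτ 2
      _ = 4 * h ^ 2 * J ^ 2 := by ring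
      _ ≤ 4 * h ^ 2 * ((2 * h) * ∫ s in a2..b, ‖v''' s‖ ^ 2) :=
          mul_le_mul_of_nonneg_left hCS (by positivity)
      _ = 8 * h ^ 3 * ∫ s in a2..b, ‖v''' s‖ ^ 2 := by ring
  have hsum := Finset.sum_le_sum key
  -- adjacent-interval pieces
  set a : ℕ → ℝ := fun k => (k:ℝ) * h with ha
  set A : ℕ → ℝ := fun k => ∫ s in a k..a (k + 1), ‖v''' s‖ ^ 2 with hA
  have ha0 : ∀ k : ℕ, 0 ≤ a k := fun k => mul_nonneg (Nat.cast_nonneg k) hh0.le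
  have hamono : ∀ k : ℕ, a k ≤ a (k + 1) := by
    intro k
    have : (k:ℝ) ≤ (k:ℝ) + 1 := by linarith
    simp only [ha, Nat.cast_add, Nat.cast_one]
    nlinarith [hh0.le]
  have haT : ∀ k : ℕ, k ≤ N → a k ≤ T := by
    intro k hk
    rw [← hNh]
    exact mul_le_mul_of_nonneg_right (by exact_mod_cast hk) hh0.le
  have hAint : ∀ k, k < N → IntervalIntegrable (fun s => ‖v''' s‖ ^ 2)
      MeasureTheory.volume (a k) (a (k + 1)) :=
    fun k hk => hgint _ _ (ha0 k) (hamono k) (haT (k + 1) hk)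
  have hAnn : ∀ k, 0 ≤ A k := fun k =>
    intervalIntegral.integral_nonneg (hamono k) (fun u _ => sq_nonneg _)
  have hS : ∑ k ∈ Finset.range N, A k = ∫ s in (0:ℝ)..T, ‖v''' s‖ ^ 2 := by
    have hadj := intervalIntegral.sum_integral_adjacent_intervals
      (f := fun s => ‖v''' s‖ ^ 2) (μ := MeasureTheory.volume) (a := a) (n := N) hAint
    have ha0' : a 0 = 0 := by simp [ha]
    have haN : a N = T := hNh
    rw [ha0', haN] at hadj
    exact hadj
  have hre : ∑ n ∈ Finset.Icc 2 N,
      (8 * h ^ 3 * ∫ s in (((n:ℝ) - 2) * h)..((n:ℝ) * h), ‖v''' s‖ ^ 2)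
      ≤ 16 * h ^ 3 * ∫ s in (0:ℝ)..T, ‖v''' s‖ ^ 2 := by
    have hre1 : ∀ n, 2 ≤ n → n ≤ N →
        (∫ s in (((n:ℝ) - 2) * h)..((n:ℝ) * h), ‖v''' s‖ ^ 2)
          = A (n - 2) + A (n - 2 + 1) := by
      intro n h2 hN'
      have hc2 : ((n - 2 : ℕ) : ℝ) = (n:ℝ) - 2 := by
        push_cast [Nat.cast_sub h2]; ring
      have hc1 : n - 2 + 1 + 1 = n - 1 + 1 := by omega
      have hc1' : ((n - 1 : ℕ) : ℝ) = (n:ℝ) - 1 := by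
        push_cast [Nat.cast_sub (by omega : 1 ≤ n)]; ring
      have hc0 : ((n - 1 + 1 : ℕ) : ℝ) = (n:ℝ) := by
        rw [Nat.cast_add, hc1', Nat.cast_one]; ring
      have hmid : a (n - 2 + 1) = ((n:ℝ) - 1) * h := by
        have : n - 2 + 1 = n - 1 := by omega
        rw [this, ha]
        simp only [hc1']
      have hlo : a (n - 2) = ((n:ℝ) - 2) * h := by rw [ha]; simp only [hc2]
      have hhi : a (n - 2 + 1 + 1) = (n:ℝ) * h := by
        rw [hc1, ha]
        simp only [hc0]
      have hint1 : IntervalIntegrable (fun s => ‖v''' s‖ ^ 2) MeasureTheory.volume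
          (a (n - 2)) (a (n - 2 + 1)) := hAint _ (by omega)
      have hint2 : IntervalIntegrable (fun s => ‖v''' s‖ ^ 2) MeasureTheory.volume
          (a (n - 2 + 1)) (a (n - 2 + 1 + 1)) := hAint _ (by omega)
      simp only [hA]
      rw [← hlo, ← hhi]
      exact (intervalIntegral.integral_add_adjacent_intervals hint1 hint2).symm
    have hstep : ∑ n ∈ Finset.Icc 2 N,
        (8 * h ^ 3 * ∫ s in (((n:ℝ) - 2) * h)..((n:ℝ) * h), ‖v''' s‖ ^ 2)
        = 8 * h ^ 3 * ∑ n ∈ Finset.Icc 2 N, (A (n - 2) + A (n - 2 + 1)) := by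
      rw [Finset.mul_sum]
      apply Finset.sum_congr rfl
      intro n hn
      rw [Finset.mem_Icc] at hn
      rw [hre1 n hn.1 hn.2]
    rw [hstep]
    have hsum3 : ∑ n ∈ Finset.Icc 2 N, (A (n - 2) + A (n - 2 + 1))
        ≤ 2 * ∑ k ∈ Finset.range N, A k := by
      rw [← Finset.Ico_add_one_right_eq_Icc, Finset.sum_Ico_eq_sum_range]
      have hN1 : N + 1 - 2 = N - 1 := by omega
      rw [hN1]
      have hsimp : ∀ i ∈ Finset.range (N - 1),
          A (2 + i - 2) + A (2 + i - 2 + 1) = A i + A (i + 1) := by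
        intro i _
        congr 1 <;> congr 1 <;> omega
      rw [Finset.sum_congr rfl hsimp, Finset.sum_add_distrib]
      have p1 : ∑ i ∈ Finset.range (N - 1), A i ≤ ∑ k ∈ Finset.range N, A k :=
        Finset.sum_le_sum_of_subset_of_nonneg
          (Finset.range_subset_range.2 (by omega)) (fun i _ _ => hAnn i)
      have p2 : ∑ i ∈ Finset.range (N - 1), A (i + 1) ≤ ∑ k ∈ Finset.range N, A k := by
        have hNsucc : N - 1 + 1 = N := by omega
        have := Finset.sum_range_succ' A (N - 1)
        rw [hNsucc] at this
        rw [this]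
        linarith [hAnn 0]
      linarith
    calc 8 * h ^ 3 * ∑ n ∈ Finset.Icc 2 N, (A (n - 2) + A (n - 2 + 1))
        ≤ 8 * h ^ 3 * (2 * ∑ k ∈ Finset.range N, A k) :=
          mul_le_mul_of_nonneg_left hsum3 (by positivity)
      _ = 16 * h ^ 3 * ∫ s in (0:ℝ)..T, ‖v''' s‖ ^ 2 := by rw [hS]; ring
  calc h * ∑ n ∈ Finset.Icc 2 N,
        ‖v' ((n : ℝ) * h)
            - (1 / (2 * h)) •
                ((3 : ℝ) • v ((n : ℝ) * h)
                  - (4 : ℝ) • v (((n : ℝ) - 1) * h)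
                  + v (((n : ℝ) - 2) * h))‖ ^ 2
      ≤ h * (16 * h ^ 3 * ∫ s in (0:ℝ)..T, ‖v''' s‖ ^ 2) :=
        mul_le_mul_of_nonneg_left (hsum.trans hre) hh0.le
    _ = 16 * h ^ 4 * ∫ s in (0:ℝ)..T, ‖v''' s‖ ^ 2 := by ring
end
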